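/- Let λ > 0 and P ∈ ℝ, and let (ψ, (a, b)) be a local solution of the homogeneous Euler ODE with parameters (λ, P). Then ψ is symmetric about the midpoint c = (a+b)/2, i.e. ψ(c + s) = ψ(c − s) for all s ∈ [0, (b−a)/2], and c is the unique critical point of ψ in (a, b). Consequently, for every ε ∈ (0, (b−a)/2) the energy-flux integral satisfies ∫_{a+ε}^{b−ε} ψ′(θ)³ dθ = 0; in particular, for λ = 2/3 (the Onsager-critical homogeneity) the flux integral of each local solution vanishes. -/

import Mathlib

open Real Set Filter Topology

noncomputable def euF (lam P : ℝ) : ℝ × ℝ → ℝ × ℝ :=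
  fun p => (p.2, ((lam - 1) * p.2 ^ 2 - lam ^ 2 * p.1 ^ 2 + 2 * (lam - 1) * P) / (lam * p.1))

lemma euF_contDiffAt {lam P : ℝ} (hlam : lam ≠ 0) {x : ℝ × ℝ} (hx : x.1 ≠ 0) :
    ContDiffAt ℝ 1 (euF lam P) x := by
  apply ContDiffAt.prodMk
  · exact contDiffAt_snd
  · exact ContDiffAt.div (by fun_prop) (by fun_prop) (mul_ne_zero hlam hx)

lemma aux_local (lam P : ℝ) (hlam : 0 < lam) (a b : ℝ) (ψ ψ' ψ'' : ℝ → ℝ)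
    (hpos : ∀ θ ∈ Set.Ioo a b, 0 < ψ θ)
    (hd1 : ∀ θ ∈ Set.Ioo a b, HasDerivAt ψ (ψ' θ) θ)
    (hd2 : ∀ θ ∈ Set.Ioo a b, HasDerivAt ψ' (ψ'' θ) θ)
    (hode : ∀ θ ∈ Set.Ioo a b, 2 * (lam - 1) * P =
      -(lam - 1) * (ψ' θ) ^ 2 + lam ^ 2 * (ψ θ) ^ 2 + lam * (ψ'' θ) * (ψ θ))
    (m t₀ : ℝ) (h1 : t₀ ∈ Set.Ioo a b) (h2 : 2 * m - t₀ ∈ Set.Ioo a b)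
    (heq : (ψ t₀, ψ' t₀) = (ψ (2 * m - t₀), -ψ' (2 * m - t₀))) :
    (fun θ => (ψ θ, ψ' θ)) =ᶠ[𝓝 t₀] fun θ => (ψ (2 * m - θ), -ψ' (2 * m - θ)) := by
  have hx : (0:ℝ) < ψ t₀ := hpos t₀ h1
  have hcd : ContDiffAt ℝ 1 (euF lam P) (ψ t₀, ψ' t₀) :=
    euF_contDiffAt hlam.ne' (by exact hx.ne')
  obtain ⟨K, s, hs, hlip⟩ := hcd.exists_lipschitzOnWith
  have hyc : ContinuousAt (fun θ => (ψ θ, ψ' θ)) t₀ :=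
    (hd1 t₀ h1).continuousAt.prodMk (hd2 t₀ h1).continuousAt
  have hzc : ContinuousAt (fun θ => (ψ (2 * m - θ), -ψ' (2 * m - θ))) t₀ := by
    have haff : ContinuousAt (fun θ : ℝ => 2 * m - θ) t₀ := by fun_prop
    exact ((hd1 _ h2).continuousAt.comp haff).prodMk ((hd2 _ h2).continuousAt.comp haff).neg
  have hs' : s ∈ 𝓝 ((ψ (2 * m - t₀), -ψ' (2 * m - t₀)) : ℝ × ℝ) := heq ▸ hs
  apply ODE_solution_unique_of_eventually (v := fun _ => euF lam P) (s := fun _ => s)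
    (f := fun θ => (ψ θ, ψ' θ)) (g := fun θ => (ψ (2 * m - θ), -ψ' (2 * m - θ))) (t₀ := t₀)
    (Filter.Eventually.of_forall fun _ => hlip) ?_ ?_ heq
  · filter_upwards [hyc hs, Ioo_mem_nhds h1.1 h1.2] with t hts htio
    refine ⟨?_, hts⟩
    have hne : lam * ψ t ≠ 0 := mul_ne_zero hlam.ne' (hpos t htio).ne'
    have hval : euF lam P (ψ t, ψ' t) = (ψ' t, ψ'' t) := by
      have h2nd : ((lam - 1) * ψ' t ^ 2 - lam ^ 2 * ψ t ^ 2 + 2 * (lam - 1) * P) / (lam * ψ t)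
          = ψ'' t := by
        rw [div_eq_iff hne]; linarith [hode t htio]
      simp [euF, h2nd]
    rw [hval]
    exact (hd1 t htio).prodMk (hd2 t htio)
  · have hop : ∀ᶠ t in 𝓝 t₀, 2 * m - t ∈ Ioo a b := by
      have haff : ContinuousAt (fun θ : ℝ => 2 * m - θ) t₀ := by fun_prop
      exact haff (Ioo_mem_nhds h2.1 h2.2)
    filter_upwards [hzc hs', hop] with t hts htio
    refine ⟨?_, hts⟩
    have hne : lam * ψ (2 * m - t) ≠ 0 := mul_ne_zero hlam.ne' (hpos _ htio).ne'
    have haff : HasDerivAt (fun θ : ℝ => 2 * m - θ) (-1) t := by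
      simpa using (hasDerivAt_id t).const_sub (2 * m)
    have hD1 : HasDerivAt (fun θ => ψ (2 * m - θ)) (ψ' (2 * m - t) * (-1)) t :=
      (hd1 _ htio).comp t haff
    have hD2 : HasDerivAt (fun θ => -ψ' (2 * m - θ)) (-(ψ'' (2 * m - t) * (-1))) t :=
      ((hd2 _ htio).comp t haff).neg
    have hval : euF lam P (ψ (2 * m - t), -ψ' (2 * m - t))
        = (ψ' (2 * m - t) * (-1), -(ψ'' (2 * m - t) * (-1))) := by
      have h2nd : ((lam - 1) * (-ψ' (2 * m - t)) ^ 2 - lam ^ 2 * ψ (2 * m - t) ^ 2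
          + 2 * (lam - 1) * P) / (lam * ψ (2 * m - t)) = ψ'' (2 * m - t) := by
        rw [div_eq_iff hne]; have := hode _ htio; nlinarith [this]
      simp only [euF, Prod.mk.injEq]
      refine ⟨by ring, ?_⟩
      rw [← h2nd]; ring_nf
    rw [hval]
    exact hD1.prodMk hD2

lemma aux_eqOn (lam P : ℝ) (hlam : 0 < lam) (a b : ℝ) (ψ ψ' ψ'' : ℝ → ℝ)
    (hpos : ∀ θ ∈ Set.Ioo a b, 0 < ψ θ)
    (hd1 : ∀ θ ∈ Set.Ioo a b, HasDerivAt ψ (ψ' θ) θ)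
    (hd2 : ∀ θ ∈ Set.Ioo a b, HasDerivAt ψ' (ψ'' θ) θ)
    (hode : ∀ θ ∈ Set.Ioo a b, 2 * (lam - 1) * P =
      -(lam - 1) * (ψ' θ) ^ 2 + lam ^ 2 * (ψ θ) ^ 2 + lam * (ψ'' θ) * (ψ θ))
    (m : ℝ) (hm : m ∈ Set.Ioo a b) (hm' : ψ' m = 0)
    (θ₁ : ℝ) (hθm : m ≤ θ₁) (hθd : θ₁ < min b (2 * m - a)) :
    (ψ θ₁, ψ' θ₁) = (ψ (2 * m - θ₁), -ψ' (2 * m - θ₁)) := by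
  set y : ℝ → ℝ × ℝ := fun θ => (ψ θ, ψ' θ) with hy
  set z : ℝ → ℝ × ℝ := fun θ => (ψ (2 * m - θ), -ψ' (2 * m - θ)) with hz
  have hbd : ∀ t, m ≤ t → t ≤ θ₁ → t ∈ Ioo a b ∧ 2 * m - t ∈ Ioo a b := by
    intro t h1 h2
    have hb1 : θ₁ < b := lt_of_lt_of_le hθd (min_le_left _ _)
    have hb2 : θ₁ < 2 * m - a := lt_of_lt_of_le hθd (min_le_right _ _)
    exact ⟨⟨lt_of_lt_of_le hm.1 h1, lt_of_le_of_lt h2 hb1⟩,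
      ⟨by linarith, by linarith [hm.2]⟩⟩
  have heqm : y m = z m := by
    have h2m : 2 * m - m = m := by ring
    simp only [hy, hz, h2m, hm']; norm_num
  have hyc : ∀ t, t ∈ Ioo a b → ContinuousAt y t := fun t ht =>
    (hd1 t ht).continuousAt.prodMk (hd2 t ht).continuousAt
  have hzc : ∀ t, 2 * m - t ∈ Ioo a b → ContinuousAt z t := by
    intro t ht
    have haff : ContinuousAt (fun θ : ℝ => 2 * m - θ) t := by fun_prop
    exact ((hd1 _ ht).continuousAt.comp haff).prodMk ((hd2 _ ht).continuousAt.comp haff).neg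
  set A : Set ℝ := {θ | θ ∈ Icc m θ₁ ∧ ∀ t ∈ Icc m θ, y t = z t} with hA
  have hmA : m ∈ A := ⟨⟨le_refl m, hθm⟩, fun t ht => by
    have : t = m := le_antisymm ht.2 ht.1
    rw [this]; exact heqm⟩
  have hbdd : BddAbove A := ⟨θ₁, fun x hx => hx.1.2⟩
  set T := sSup A with hT
  have hT1 : m ≤ T := le_csSup hbdd hmA
  have hT2 : T ≤ θ₁ := csSup_le ⟨m, hmA⟩ (fun x hx => hx.1.2)
  have hlt : ∀ t, m ≤ t → t < T → y t = z t := by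
    intro t h1 h2
    obtain ⟨x, hxA, hx⟩ := exists_lt_of_lt_csSup ⟨m, hmA⟩ h2
    exact hxA.2 t ⟨h1, le_of_lt hx⟩
  have hTeq : y T = z T := by
    rcases eq_or_lt_of_le hT1 with h | h
    · rw [← h]; exact heqm
    · haveI hne : (𝓝[Ico m T] T).NeBot := by
        refine mem_closure_iff_nhdsWithin_neBot.mp ?_
        rw [closure_Ico (ne_of_lt h)]
        exact ⟨le_of_lt h, le_refl T⟩
      have t1 : Tendsto y (𝓝[Ico m T] T) (𝓝 (y T)) :=
        (hyc T (hbd T hT1 hT2).1).continuousWithinAt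
      have t2 : Tendsto z (𝓝[Ico m T] T) (𝓝 (z T)) :=
        (hzc T (hbd T hT1 hT2).2).continuousWithinAt
      have hev : y =ᶠ[𝓝[Ico m T] T] z := by
        filter_upwards [self_mem_nhdsWithin] with t ht
        exact hlt t ht.1 ht.2
      exact tendsto_nhds_unique t1 (t2.congr' hev.symm)
  rcases eq_or_lt_of_le hT2 with hTθ | hTθ
  · rw [← hTθ]; exact hTeq
  · exfalso
    have hloc := aux_local lam P hlam a b ψ ψ' ψ'' hpos hd1 hd2 hode m T
      (hbd T hT1 hT2).1 (hbd T hT1 hT2).2 hTeq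
    obtain ⟨δ, hδ, hball⟩ := Metric.eventually_nhds_iff.mp hloc
    set T' := min (T + δ / 2) θ₁ with hT'
    have hTT' : T < T' := lt_min (by linarith) hTθ
    have hT'A : T' ∈ A := by
      refine ⟨⟨le_trans hT1 hTT'.le, min_le_right _ _⟩, ?_⟩
      intro t ht
      rcases lt_or_ge t T with h | h
      · exact hlt t ht.1 h
      rcases eq_or_lt_of_le h with h' | h'
      · rw [← h']; exact hTeq
      · apply hball
        rw [Real.dist_eq, abs_lt]
        have : t ≤ T + δ / 2 := le_trans ht.2 (min_le_left _ _)
        constructor <;> linarith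
    have : T' ≤ T := le_csSup hbdd hT'A
    linarith

lemma aux_key (lam P : ℝ) (hlam : 0 < lam) (a b : ℝ) (hab : a < b) (ψ ψ' ψ'' : ℝ → ℝ)
    (hcont : ContinuousOn ψ (Set.Icc a b))
    (ha : ψ a = 0) (hb : ψ b = 0)
    (hpos : ∀ θ ∈ Set.Ioo a b, 0 < ψ θ)
    (hd1 : ∀ θ ∈ Set.Ioo a b, HasDerivAt ψ (ψ' θ) θ)
    (hd2 : ∀ θ ∈ Set.Ioo a b, HasDerivAt ψ' (ψ'' θ) θ)
    (hode : ∀ θ ∈ Set.Ioo a b, 2 * (lam - 1) * P =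
      -(lam - 1) * (ψ' θ) ^ 2 + lam ^ 2 * (ψ θ) ^ 2 + lam * (ψ'' θ) * (ψ θ))
    (m : ℝ) (hm : m ∈ Set.Ioo a b) (hm' : ψ' m = 0) :
    m = (a + b) / 2 ∧ ∀ θ, m ≤ θ → θ < b → ψ θ = ψ (2 * m - θ) := by
  have hE : ∀ θ, m ≤ θ → θ < min b (2 * m - a) → ψ θ = ψ (2 * m - θ) := by
    intro θ h1 h2
    have := aux_eqOn lam P hlam a b ψ ψ' ψ'' hpos hd1 hd2 hode m hm hm' θ h1 h2
    exact congrArg Prod.fst this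
  have hmid : 2 * m - a = b := by
    by_contra hne
    rcases lt_or_gt_of_ne hne with hlt | hgt
    · -- 2m - a < b : ψ (2m-a) would be 0
      have hdd : 2 * m - a ∈ Ioo a b := ⟨by linarith [hm.1], hlt⟩
      have hmdd : m < 2 * m - a := by linarith [hm.1]
      have hmin : min b (2 * m - a) = 2 * m - a := min_eq_right (le_of_lt hlt)
      haveI hneB : (𝓝[Ico m (2 * m - a)] (2 * m - a)).NeBot := by
        refine mem_closure_iff_nhdsWithin_neBot.mp ?_
        rw [closure_Ico (ne_of_lt hmdd)]
        exact ⟨le_of_lt hmdd, le_refl _⟩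
      have t1 : Tendsto ψ (𝓝[Ico m (2 * m - a)] (2 * m - a)) (𝓝 (ψ (2 * m - a))) :=
        (hd1 _ hdd).continuousAt.continuousWithinAt
      have tg : Tendsto (fun θ => 2 * m - θ) (𝓝[Ico m (2 * m - a)] (2 * m - a))
          (𝓝[Icc a b] a) := by
        apply tendsto_nhdsWithin_of_tendsto_nhds_of_eventually_within
        · have hc : Continuous (fun θ : ℝ => 2 * m - θ) := by fun_prop
          have := (hc.tendsto (2 * m - a)).mono_left
            (nhdsWithin_le_nhds (s := Ico m (2 * m - a)))
          convert this using 2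
          ring
        · filter_upwards [self_mem_nhdsWithin] with θ hθ
          exact ⟨by linarith [hθ.2], by linarith [hθ.1, hm.2]⟩
      have t2 : Tendsto (fun θ => ψ (2 * m - θ)) (𝓝[Ico m (2 * m - a)] (2 * m - a))
          (𝓝 (ψ a)) :=
        Filter.Tendsto.comp (hcont.continuousWithinAt (left_mem_Icc.mpr hab.le)) tg
      have hev : (fun θ => ψ (2 * m - θ)) =ᶠ[𝓝[Ico m (2 * m - a)] (2 * m - a)] ψ := by
        filter_upwards [self_mem_nhdsWithin] with θ hθ
        exact (hE θ hθ.1 (by rw [hmin]; exact hθ.2)).symm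
      have : ψ (2 * m - a) = ψ a := tendsto_nhds_unique t1 (t2.congr' hev)
      rw [ha] at this
      exact absurd this (ne_of_gt (hpos _ hdd))
    · -- 2m - a > b : ψ (2m - b) would be 0
      have h2mb : 2 * m - b ∈ Ioo a b := ⟨by linarith, by linarith [hm.2]⟩
      have hmb : m < b := hm.2
      have hmin : min b (2 * m - a) = b := min_eq_left (le_of_lt hgt)
      haveI hneB : (𝓝[Ico m b] b).NeBot := by
        refine mem_closure_iff_nhdsWithin_neBot.mp ?_
        rw [closure_Ico (ne_of_lt hmb)]
        exact ⟨le_of_lt hmb, le_refl _⟩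
      have t1 : Tendsto ψ (𝓝[Ico m b] b) (𝓝 (ψ b)) :=
        (hcont.continuousWithinAt (right_mem_Icc.mpr hab.le)).mono
          (fun x hx => ⟨le_trans hm.1.le hx.1, hx.2.le⟩)
      have t2 : Tendsto (fun θ => ψ (2 * m - θ)) (𝓝[Ico m b] b) (𝓝 (ψ (2 * m - b))) := by
        have haff : ContinuousAt (fun θ : ℝ => 2 * m - θ) b := by fun_prop
        exact ((hd1 _ h2mb).continuousAt.comp haff).continuousWithinAt
      have hev : ψ =ᶠ[𝓝[Ico m b] b] (fun θ => ψ (2 * m - θ)) := by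
        filter_upwards [self_mem_nhdsWithin] with θ hθ
        exact hE θ hθ.1 (by rw [hmin]; exact hθ.2)
      have : ψ b = ψ (2 * m - b) := tendsto_nhds_unique t1 (t2.congr' hev.symm)
      rw [hb] at this
      exact absurd this.symm (ne_of_gt (hpos _ h2mb))
  refine ⟨by linarith, fun θ h1 h2 => ?_⟩
  exact hE θ h1 (by rw [hmid]; simpa using h2)

/-- Every local solution `(ψ, (a,b))` of the homogeneous Euler ODE is symmetric
about the midpoint `c = (a+b)/2` of its life-time, `c` is the unique critical point of `ψ` in
`(a,b)`, and consequently the energy-flux integral `∫ ψ'³` over any symmetric subinterval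
`(a+ε, b-ε)` vanishes — in particular for the Onsager-critical case `λ = 2/3`. -/
theorem local_solution_symmetry_and_zero_flux
    (lam P : ℝ) (hlam : 0 < lam)
    (a b : ℝ) (hab : a < b) (ψ ψ' ψ'' : ℝ → ℝ)
    (hcont : ContinuousOn ψ (Set.Icc a b))
    (ha : ψ a = 0) (hb : ψ b = 0)
    (hpos : ∀ θ ∈ Set.Ioo a b, 0 < ψ θ)
    (hd1 : ∀ θ ∈ Set.Ioo a b, HasDerivAt ψ (ψ' θ) θ)
    (hd2 : ∀ θ ∈ Set.Ioo a b, HasDerivAt ψ' (ψ'' θ) θ)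
    (hode : ∀ θ ∈ Set.Ioo a b, 2 * (lam - 1) * P =
      -(lam - 1) * (ψ' θ) ^ 2 + lam ^ 2 * (ψ θ) ^ 2 + lam * (ψ'' θ) * (ψ θ)) :
    (∀ s ∈ Set.Icc (0 : ℝ) ((b - a) / 2),
      ψ ((a + b) / 2 + s) = ψ ((a + b) / 2 - s)) ∧
    (∀ θ ∈ Set.Ioo a b, ψ' θ = 0 → θ = (a + b) / 2) ∧
    (∀ ε ∈ Set.Ioo (0 : ℝ) ((b - a) / 2),
      ∫ θ in (a + ε)..(b - ε), (ψ' θ) ^ 3 = 0) := by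
  set c := (a + b) / 2 with hc
  have hcIoo : c ∈ Ioo a b := ⟨by simp [hc]; linarith, by simp [hc]; linarith⟩
  -- existence of a critical point: the max of ψ
  obtain ⟨m, hmIcc, hmax⟩ := isCompact_Icc.exists_isMaxOn (nonempty_Icc.mpr hab.le) hcont
  have hmIoo : m ∈ Ioo a b := by
    rcases eq_or_lt_of_le hmIcc.1 with h | h
    · exfalso
      have := hmax (Ioo_subset_Icc_self hcIoo)
      rw [← h, ha] at this
      exact absurd this (not_le.mpr (hpos c hcIoo))
    rcases eq_or_lt_of_le hmIcc.2 with h' | h'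
    · exfalso
      have := hmax (Ioo_subset_Icc_self hcIoo)
      rw [h', hb] at this
      exact absurd this (not_le.mpr (hpos c hcIoo))
    exact ⟨h, h'⟩
  have hm' : ψ' m = 0 := by
    have hloc : IsLocalMax ψ m := hmax.isLocalMax (Icc_mem_nhds hmIoo.1 hmIoo.2)
    exact hloc.hasDerivAt_eq_zero (hd1 m hmIoo)
  obtain ⟨hmc, hsym⟩ := aux_key lam P hlam a b hab ψ ψ' ψ'' hcont ha hb hpos hd1 hd2 hode
    m hmIoo hm'
  rw [hmc] at hsym
  -- Part 1: symmetry
  have part1 : ∀ s ∈ Set.Icc (0 : ℝ) ((b - a) / 2), ψ (c + s) = ψ (c - s) := by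
    intro s hs
    rcases eq_or_lt_of_le hs.2 with h | h
    · have h1 : c + s = b := by rw [h, hc]; ring
      have h2 : c - s = a := by rw [h, hc]; ring
      rw [h1, h2, ha, hb]
    · have h1 : c ≤ c + s := by linarith [hs.1]
      have h2 : c + s < b := by simp [hc] at h ⊢; linarith
      have := hsym (c + s) h1 h2
      rw [this]; congr 1; rw [hc]; ring
  -- symmetry on the closed interval, as a reflection identity
  have hrefl : ∀ θ ∈ Icc a b, ψ θ = ψ (2 * c - θ) := by
    intro θ hθ
    rcases le_total c θ with h | h
    · have hs : θ - c ∈ Icc (0:ℝ) ((b - a) / 2) := by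
        constructor <;> [linarith; skip]
        simp [hc] at h ⊢; linarith [hθ.2]
      have := part1 _ hs
      have e1 : c + (θ - c) = θ := by ring
      have e2 : c - (θ - c) = 2 * c - θ := by ring
      rwa [e1, e2] at this
    · have hs : c - θ ∈ Icc (0:ℝ) ((b - a) / 2) := by
        constructor <;> [linarith; skip]
        simp [hc] at h ⊢; linarith [hθ.1]
      have := part1 _ hs
      have e1 : c + (c - θ) = 2 * c - θ := by ring
      have e2 : c - (c - θ) = θ := by ring
      rw [e1, e2] at this
      exact this.symm
  -- derivative is odd about c
  have hodd : ∀ θ ∈ Ioo a b, ψ' θ = -ψ' (2 * c - θ) := by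
    intro θ hθ
    have hθ' : 2 * c - θ ∈ Ioo a b := ⟨by simp [hc] at hθ ⊢; linarith [hθ.2], by simp [hc] at hθ ⊢; linarith [hθ.1]⟩
    have haff : HasDerivAt (fun t : ℝ => 2 * c - t) (-1) θ := by
      simpa using (hasDerivAt_id θ).const_sub (2 * c)
    have hD : HasDerivAt (fun t => ψ (2 * c - t)) (ψ' (2 * c - θ) * (-1)) θ :=
      (hd1 _ hθ').comp θ haff
    have hev : (fun t => ψ (2 * c - t)) =ᶠ[𝓝 θ] ψ := by
      filter_upwards [Ioo_mem_nhds hθ.1 hθ.2] with t ht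
      exact (hrefl t (Ioo_subset_Icc_self ht)).symm
    have hD' : HasDerivAt ψ (ψ' (2 * c - θ) * (-1)) θ := hD.congr_of_eventuallyEq hev.symm
    have := (hd1 θ hθ).unique hD'
    rw [this]; ring
  -- Part 2: uniqueness of critical point
  have part2 : ∀ θ ∈ Set.Ioo a b, ψ' θ = 0 → θ = c := by
    intro θ hθ h0
    exact (aux_key lam P hlam a b hab ψ ψ' ψ'' hcont ha hb hpos hd1 hd2 hode θ hθ h0).1
  -- Part 3: flux vanishes
  refine ⟨part1, part2, ?_⟩
  intro ε hε
  have hle : a + ε ≤ b - ε := by have := hε.2; linarith [hε.1]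
  have hsub : Icc (a + ε) (b - ε) ⊆ Ioo a b := fun x hx =>
    ⟨by linarith [hx.1, hε.1], by linarith [hx.2, hε.1]⟩
  have hcongr : EqOn (fun θ => (ψ' θ) ^ 3) (fun θ => -((ψ' (2 * c - θ)) ^ 3))
      (Set.uIcc (a + ε) (b - ε)) := by
    intro x hx
    rw [Set.uIcc_of_le hle] at hx
    have := hodd x (hsub hx)
    simp only
    rw [this]; ring
  have key : (∫ θ in (a + ε)..(b - ε), (ψ' θ) ^ 3)
      = -∫ θ in (a + ε)..(b - ε), (ψ' θ) ^ 3 := by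
    calc (∫ θ in (a + ε)..(b - ε), (ψ' θ) ^ 3)
        = ∫ θ in (a + ε)..(b - ε), -((ψ' (2 * c - θ)) ^ 3) :=
          intervalIntegral.integral_congr hcongr
      _ = -∫ θ in (a + ε)..(b - ε), (ψ' (2 * c - θ)) ^ 3 := intervalIntegral.integral_neg
      _ = -∫ θ in (2 * c - (b - ε))..(2 * c - (a + ε)), (ψ' θ) ^ 3 := by
          rw [intervalIntegral.integral_comp_sub_left (fun θ => (ψ' θ) ^ 3) (2 * c)]
      _ = -∫ θ in (a + ε)..(b - ε), (ψ' θ) ^ 3 := by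
          have e1 : 2 * c - (b - ε) = a + ε := by rw [hc]; ring
          have e2 : 2 * c - (a + ε) = b - ε := by rw [hc]; ring
          rw [e1, e2]
  linarith [key]
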